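/- Let (X, x₀) and (Y, y₀) be compact Hausdorff based spaces and H a complex Hilbert space. Consider the product non-unital star algebra C₀(X) × C₀(Y) (which is star-isomorphic to C₀(X ∨ Y)). Then the map sending a bounded-rank (not necessarily unital) star-algebra homomorphism F : C₀(X) × C₀(Y) → B(H) to the pair (F₁, F₂), where F₁(f) := F(f, 0) and F₂(g) := F(0, g), is a homeomorphism from the space of such homomorphisms (topologized as a subspace of continuous maps with the compact-open topology, B(H) carrying the weak operator topology) onto the subspace of pairs (F₁, F₂) ∈ 𝔠(X) × 𝔠(Y) satisfying F₁(f) F₂(g) = 0, F₂(g) F₁(f) = 0, F₁(f)* F₂(g) = 0 and F₁(f) F₂(g)* = 0 for all f ∈ C₀(X), g ∈ C₀(Y); its inverse sends (F₁, F₂) to (f, g) ↦ F₁(f) + F₂(g). -/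

import Mathlib

set_option synthInstance.maxHeartbeats 400000

noncomputable section

/-- The non-unital star subalgebra `C₀(X)` of `C(X, ℂ)` consisting of the continuous functions
vanishing at the basepoint `x₀`. -/
def zeroAt (X : Type*) [TopologicalSpace X] (x₀ : X) :
    NonUnitalStarSubalgebra ℂ C(X, ℂ) where
  carrier := {f | f x₀ = 0}
  add_mem' := by intro f g hf hg; simp_all [Set.mem_setOf_eq]
  zero_mem' := by simp
  mul_mem' := by intro f g hf hg; simp_all [Set.mem_setOf_eq]
  smul_mem' := by intro c f hf; simp_all [Set.mem_setOf_eq]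
  star_mem' := by intro f hf; simp_all [Set.mem_setOf_eq]

/-- `C₀(X)` for the based space `(X, x₀)`, with the sup-norm (compact-open) topology inherited
from `C(X, ℂ)`. -/
abbrev CZero (X : Type*) [TopologicalSpace X] (x₀ : X) : Type _ := ↥(zeroAt X x₀)

variable (H : Type*) [NormedAddCommGroup H] [InnerProductSpace ℂ H] [CompleteSpace H]

/-- A continuous map `F : C₀(X) → B(H)` (with `B(H)` carrying the weak operator topology) is a
*configuration* if it is a (not necessarily unital) star-algebra homomorphism of uniformly
bounded finite rank. -/
def IsConfig {X : Type*} [TopologicalSpace X] {x₀ : X}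
    (F : C(CZero X x₀, H →WOT[ℂ] H)) : Prop :=
  ∃ Φ : CZero X x₀ →⋆ₙₐ[ℂ] (H →L[ℂ] H),
    (∀ f, F f = ContinuousLinearMapWOT.ofCLM (Φ f)) ∧
    ∃ n : ℕ, ∀ f, ∃ V : Submodule ℂ H, FiniteDimensional ℂ V ∧
      Module.finrank ℂ V ≤ n ∧ LinearMap.range ((Φ f) : H →ₗ[ℂ] H) ≤ V

/-- The configuration space `𝔠(X)`: bounded-rank star-algebra homomorphisms
`C₀(X) → B(H)`, topologized as a subspace of `C(C₀(X), B(H))` with the compact-open topology,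
`B(H)` carrying the weak operator topology. -/
def Config (X : Type*) [TopologicalSpace X] (x₀ : X) : Type _ :=
  {F : C(CZero X x₀, H →WOT[ℂ] H) // IsConfig H F}

instance (X : Type*) [TopologicalSpace X] (x₀ : X) : TopologicalSpace (Config H X x₀) :=
  instTopologicalSpaceSubtype

/-- Pullback of functions vanishing at basepoints along a based continuous map. -/
def pullback {X Y : Type*} [TopologicalSpace X] [TopologicalSpace Y] {x₀ : X} {y₀ : Y}
    (φ : C(X, Y)) (hφ : φ x₀ = y₀) (f : CZero Y y₀) : CZero X x₀ :=
  ⟨(f : C(Y, ℂ)).comp φ, by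
    have hf : (f : C(Y, ℂ)) y₀ = 0 := f.2
    show ((f : C(Y, ℂ)).comp φ) x₀ = 0
    simp [ContinuousMap.comp_apply, hφ, hf]⟩

/-- A continuous map `F : C₀(X) × C₀(Y) → B(H)` is a configuration if it is a (not necessarily
unital) star-algebra homomorphism of uniformly bounded finite rank from the product star
algebra `C₀(X) × C₀(Y)` (which is star-isomorphic to `C₀(X ∨ Y)`). -/
def IsConfigProd {X Y : Type*} [TopologicalSpace X] [TopologicalSpace Y] {x₀ : X} {y₀ : Y}
    (F : C(CZero X x₀ × CZero Y y₀, H →WOT[ℂ] H)) : Prop :=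
  ∃ Φ : (CZero X x₀ × CZero Y y₀) →⋆ₙₐ[ℂ] (H →L[ℂ] H),
    (∀ fg, F fg = ContinuousLinearMapWOT.ofCLM (Φ fg)) ∧
    ∃ n : ℕ, ∀ fg, ∃ V : Submodule ℂ H, FiniteDimensional ℂ V ∧
      Module.finrank ℂ V ≤ n ∧ LinearMap.range ((Φ fg) : H →ₗ[ℂ] H) ≤ V

/-- The mutual orthogonality conditions on a pair of configurations:
`F₁ f · F₂ g = 0`, `F₂ g · F₁ f = 0`, `(F₁ f)⋆ · F₂ g = 0` and `F₁ f · (F₂ g)⋆ = 0`. -/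
def orthPair {X Y : Type*} [TopologicalSpace X] [TopologicalSpace Y] {x₀ : X} {y₀ : Y}
    (p : Config H X x₀ × Config H Y y₀) : Prop :=
  ∀ (f : CZero X x₀) (g : CZero Y y₀),
    ContinuousLinearMapWOT.toCLM (p.1.1 f) *
        ContinuousLinearMapWOT.toCLM (p.2.1 g) = 0 ∧
    ContinuousLinearMapWOT.toCLM (p.2.1 g) *
        ContinuousLinearMapWOT.toCLM (p.1.1 f) = 0 ∧
    star (ContinuousLinearMapWOT.toCLM (p.1.1 f)) *
        ContinuousLinearMapWOT.toCLM (p.2.1 g) = 0 ∧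
    ContinuousLinearMapWOT.toCLM (p.1.1 f) *
        star (ContinuousLinearMapWOT.toCLM (p.2.1 g)) = 0

section Stmt10Aux

variable {R A B C : Type*} [Monoid R]
  [NonUnitalNonAssocSemiring A] [DistribMulAction R A]
  [NonUnitalNonAssocSemiring B] [DistribMulAction R B]
  [NonUnitalNonAssocSemiring C] [DistribMulAction R C]

/-- The inclusion `a ↦ (a, 0)` as a non-unital star algebra homomorphism. -/
def stmt10inl [Star A] [StarAddMonoid B] : A →⋆ₙₐ[R] A × B where
  toFun a := (a, 0)
  map_smul' r a := by refine Prod.ext rfl ?_; simp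
  map_zero' := rfl
  map_add' a b := by refine Prod.ext rfl ?_; simp
  map_mul' a b := by refine Prod.ext rfl ?_; simp
  map_star' a := by refine Prod.ext rfl ?_; simp

/-- The inclusion `b ↦ (0, b)` as a non-unital star algebra homomorphism. -/
def stmt10inr [StarAddMonoid A] [Star B] : B →⋆ₙₐ[R] A × B where
  toFun b := (0, b)
  map_smul' r b := by refine Prod.ext ?_ rfl; simp
  map_zero' := rfl
  map_add' a b := by refine Prod.ext ?_ rfl; simp
  map_mul' a b := by refine Prod.ext ?_ rfl; simp
  map_star' a := by refine Prod.ext ?_ rfl; simp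

/-- The sum of two mutually annihilating non-unital star algebra homomorphisms, as a
homomorphism on the product algebra. -/
def stmt10sum [Star A] [Star B] [StarAddMonoid C] (Φ₁ : A →⋆ₙₐ[R] C) (Φ₂ : B →⋆ₙₐ[R] C)
    (h12 : ∀ a b, Φ₁ a * Φ₂ b = 0) (h21 : ∀ a b, Φ₂ b * Φ₁ a = 0) :
    (A × B) →⋆ₙₐ[R] C where
  toFun x := Φ₁ x.1 + Φ₂ x.2
  map_smul' r x := by simp [smul_add]
  map_zero' := by simp
  map_add' x y := by
    simp only [Prod.fst_add, Prod.snd_add, map_add]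
    abel
  map_mul' x y := by
    simp only [Prod.fst_mul, Prod.snd_mul, map_mul, add_mul, mul_add, h12, h21,
      add_zero, zero_add]
  map_star' x := by
    simp only [Prod.fst_star, Prod.snd_star, map_star, star_add]

lemma stmt10sum_apply [Star A] [Star B] [StarAddMonoid C] (Φ₁ : A →⋆ₙₐ[R] C)
    (Φ₂ : B →⋆ₙₐ[R] C) (h12 : ∀ a b, Φ₁ a * Φ₂ b = 0) (h21 : ∀ a b, Φ₂ b * Φ₁ a = 0)
    (x : A × B) : stmt10sum Φ₁ Φ₂ h12 h21 x = Φ₁ x.1 + Φ₂ x.2 := rfl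

end Stmt10Aux

lemma stmt10_range_add_le {H : Type*} [NormedAddCommGroup H] [InnerProductSpace ℂ H]
    (S T : H →L[ℂ] H) :
    LinearMap.range ((S + T : H →L[ℂ] H) : H →ₗ[ℂ] H) ≤
      LinearMap.range (S : H →ₗ[ℂ] H) ⊔ LinearMap.range (T : H →ₗ[ℂ] H) := by
  rintro - ⟨x, rfl⟩
  exact Submodule.add_mem_sup (LinearMap.mem_range_self _ x) (LinearMap.mem_range_self _ x)

set_option maxHeartbeats 1000000 in
/-- The configuration space of the wedge `X ∨ Y`, i.e. the space of
bounded-rank star homomorphisms on the product algebra `C₀(X) × C₀(Y) ≅ C₀(X ∨ Y)`, is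
homeomorphic—via `F ↦ (F(·, 0), F(0, ·))`, with inverse `(F₁, F₂) ↦ ((f, g) ↦ F₁ f + F₂ g)`—to
the subspace of `𝔠(X) × 𝔠(Y)` consisting of the pairs satisfying the mutual orthogonality
conditions. -/
theorem stmt10
    {X Y : Type*} [TopologicalSpace X] [CompactSpace X] [T2Space X]
    [TopologicalSpace Y] [CompactSpace Y] [T2Space Y] {x₀ : X} {y₀ : Y}
    (H : Type*) [NormedAddCommGroup H] [InnerProductSpace ℂ H] [CompleteSpace H] :
    ∃ h : {F : C(CZero X x₀ × CZero Y y₀, H →WOT[ℂ] H) // IsConfigProd H F} ≃ₜ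
        {p : Config H X x₀ × Config H Y y₀ // orthPair H p},
      (∀ (F : {F : C(CZero X x₀ × CZero Y y₀, H →WOT[ℂ] H) // IsConfigProd H F})
          (f : CZero X x₀), ((h F).1.1).1 f = F.1 (f, 0)) ∧
      (∀ (F : {F : C(CZero X x₀ × CZero Y y₀, H →WOT[ℂ] H) // IsConfigProd H F})
          (g : CZero Y y₀), ((h F).1.2).1 g = F.1 (0, g)) ∧
      (∀ (p : {p : Config H X x₀ × Config H Y y₀ // orthPair H p})
          (fg : CZero X x₀ × CZero Y y₀),
        (h.symm p).1 fg = (p.1.1.1 fg.1) + (p.1.2.1 fg.2)) := by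
  classical
  let ι₁ : C(CZero X x₀, CZero X x₀ × CZero Y y₀) :=
    ⟨fun f => (f, 0), continuous_id.prodMk continuous_const⟩
  let ι₂ : C(CZero Y y₀, CZero X x₀ × CZero Y y₀) :=
    ⟨fun g => (0, g), continuous_const.prodMk continuous_id⟩
  let π₁ : C(CZero X x₀ × CZero Y y₀, CZero X x₀) := ⟨Prod.fst, continuous_fst⟩
  let π₂ : C(CZero X x₀ × CZero Y y₀, CZero Y y₀) := ⟨Prod.snd, continuous_snd⟩
  -- forward direction: each composition is a configuration
  have fwd1 : ∀ F : {F : C(CZero X x₀ × CZero Y y₀, H →WOT[ℂ] H) // IsConfigProd H F},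
      IsConfig H (F.1.comp ι₁) := by
    rintro ⟨F, Φ, hΦ, n, hn⟩
    exact ⟨Φ.comp stmt10inl, fun f => hΦ _, n, fun f => hn _⟩
  have fwd2 : ∀ F : {F : C(CZero X x₀ × CZero Y y₀, H →WOT[ℂ] H) // IsConfigProd H F},
      IsConfig H (F.1.comp ι₂) := by
    rintro ⟨F, Φ, hΦ, n, hn⟩
    exact ⟨Φ.comp stmt10inr, fun g => hΦ _, n, fun g => hn _⟩
  have orth : ∀ F : {F : C(CZero X x₀ × CZero Y y₀, H →WOT[ℂ] H) // IsConfigProd H F},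
      orthPair H (⟨F.1.comp ι₁, fwd1 F⟩, ⟨F.1.comp ι₂, fwd2 F⟩) := by
    rintro ⟨F, hFconf⟩ f g
    obtain ⟨Φ, hΦ, -⟩ := hFconf
    have e1 : ContinuousLinearMapWOT.toCLM ((F.comp ι₁) f) = Φ (f, 0) := by
      show ContinuousLinearMapWOT.toCLM (F (f, 0)) = Φ (f, 0)
      rw [hΦ]
    have e2 : ContinuousLinearMapWOT.toCLM ((F.comp ι₂) g) = Φ (0, g) := by
      show ContinuousLinearMapWOT.toCLM (F (0, g)) = Φ (0, g)
      rw [hΦ]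
    have key : ∀ a b : CZero X x₀ × CZero Y y₀, a * b = 0 → Φ a * Φ b = 0 := by
      intro a b hab
      rw [← map_mul, hab, map_zero]
    refine ⟨?_, ?_, ?_, ?_⟩
    · rw [e1, e2]
      exact key _ _ (by rw [Prod.ext_iff]; constructor <;> simp)
    · rw [e1, e2]
      exact key _ _ (by rw [Prod.ext_iff]; constructor <;> simp)
    · rw [e1, e2, ← map_star]
      exact key _ _ (by rw [Prod.ext_iff]; constructor <;> simp)
    · rw [e1, e2, ← map_star]
      exact key _ _ (by rw [Prod.ext_iff]; constructor <;> simp)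
  -- backward direction
  have bwd : ∀ p : {p : Config H X x₀ × Config H Y y₀ // orthPair H p},
      IsConfigProd H (p.1.1.1.comp π₁ + p.1.2.1.comp π₂) := by
    rintro ⟨⟨⟨F₁, h₁⟩, ⟨F₂, h₂⟩⟩, horth⟩
    obtain ⟨Φ₁, hΦ₁, n₁, hn₁⟩ := h₁
    obtain ⟨Φ₂, hΦ₂, n₂, hn₂⟩ := h₂
    have e1 : ∀ f, ContinuousLinearMapWOT.toCLM (F₁ f) = Φ₁ f := fun f => by
      rw [hΦ₁ f]
    have e2 : ∀ g, ContinuousLinearMapWOT.toCLM (F₂ g) = Φ₂ g := fun g => by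
      rw [hΦ₂ g]
    have h12 : ∀ f g, Φ₁ f * Φ₂ g = 0 := by
      intro f g
      have := (horth f g).1
      rwa [e1, e2] at this
    have h21 : ∀ f g, Φ₂ g * Φ₁ f = 0 := by
      intro f g
      have := (horth f g).2.1
      rwa [e1, e2] at this
    refine ⟨stmt10sum Φ₁ Φ₂ h12 (fun f g => h21 f g), fun fg => ?_, n₁ + n₂, fun fg => ?_⟩
    · have : (F₁.comp π₁ + F₂.comp π₂) fg = F₁ fg.1 + F₂ fg.2 := by
        simp [ContinuousMap.add_apply, π₁, π₂]
      rw [this, stmt10sum_apply, hΦ₁, hΦ₂]; rfl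
    · obtain ⟨V₁, hfd₁, hr₁, hle₁⟩ := hn₁ fg.1
      obtain ⟨V₂, hfd₂, hr₂, hle₂⟩ := hn₂ fg.2
      refine ⟨V₁ ⊔ V₂, inferInstance, ?_, ?_⟩
      · exact le_trans (Submodule.finrank_add_le_finrank_add_finrank V₁ V₂)
          (add_le_add hr₁ hr₂)
      · rw [stmt10sum_apply]
        exact le_trans (stmt10_range_add_le _ _) (sup_le_sup hle₁ hle₂)
  -- continuity
  have c₁ : Continuous
      (fun F : {F : C(CZero X x₀ × CZero Y y₀, H →WOT[ℂ] H) // IsConfigProd H F} =>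
        F.1.comp ι₁) := (ContinuousMap.continuous_precomp ι₁).comp continuous_subtype_val
  have c₂ : Continuous
      (fun F : {F : C(CZero X x₀ × CZero Y y₀, H →WOT[ℂ] H) // IsConfigProd H F} =>
        F.1.comp ι₂) := (ContinuousMap.continuous_precomp ι₂).comp continuous_subtype_val
  have cinv : Continuous
      (fun p : {p : Config H X x₀ × Config H Y y₀ // orthPair H p} =>
        p.1.1.1.comp π₁ + p.1.2.1.comp π₂) := by
    have hc1 : Continuous
        (fun p : {p : Config H X x₀ × Config H Y y₀ // orthPair H p} => p.1.1.1) :=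
      continuous_subtype_val.comp (continuous_fst.comp continuous_subtype_val)
    have hc2 : Continuous
        (fun p : {p : Config H X x₀ × Config H Y y₀ // orthPair H p} => p.1.2.1) :=
      continuous_subtype_val.comp (continuous_snd.comp continuous_subtype_val)
    have hc1' : Continuous
        (fun p : {p : Config H X x₀ × Config H Y y₀ // orthPair H p} =>
          p.1.1.1.comp π₁) := (ContinuousMap.continuous_precomp π₁).comp hc1
    have hc2' : Continuous
        (fun p : {p : Config H X x₀ × Config H Y y₀ // orthPair H p} =>
          p.1.2.1.comp π₂) := (ContinuousMap.continuous_precomp π₂).comp hc2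
    exact hc1'.add hc2'
  refine ⟨{ toFun := fun F => ⟨(⟨F.1.comp ι₁, fwd1 F⟩, ⟨F.1.comp ι₂, fwd2 F⟩), orth F⟩
            invFun := fun p => ⟨p.1.1.1.comp π₁ + p.1.2.1.comp π₂, bwd p⟩
            left_inv := ?_
            right_inv := ?_
            continuous_toFun := Continuous.subtype_mk
              ((c₁.subtype_mk _).prodMk (c₂.subtype_mk _)) _
            continuous_invFun := cinv.subtype_mk _ },
    fun F f => rfl, fun F g => rfl, fun p fg => ?_⟩
  · rintro ⟨F, hFconf⟩
    obtain ⟨Φ, hΦ, -⟩ := id hFconf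
    apply Subtype.ext
    refine ContinuousMap.ext fun fg => ?_
    simp only [ContinuousMap.add_apply, ContinuousMap.comp_apply, ι₁, ι₂, π₁, π₂,
      ContinuousMap.coe_mk]
    have hsum : ((fg.1, (0 : CZero Y y₀)) + ((0 : CZero X x₀), fg.2)) = fg := by
      rw [Prod.ext_iff]
      exact ⟨add_zero _, zero_add _⟩
    rw [hΦ, hΦ, hΦ]
    calc _ = ContinuousLinearMapWOT.ofCLM (Φ (fg.1, 0) + Φ (0, fg.2)) := rfl
      _ = _ := by rw [← map_add, hsum]
  · rintro ⟨⟨⟨F₁, h₁⟩, ⟨F₂, h₂⟩⟩, horth⟩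
    obtain ⟨Φ₁, hΦ₁, -⟩ := id h₁
    obtain ⟨Φ₂, hΦ₂, -⟩ := id h₂
    have z1 : F₁ 0 = 0 := by rw [hΦ₁ 0, map_zero]; rfl
    have z2 : F₂ 0 = 0 := by rw [hΦ₂ 0, map_zero]; rfl
    apply Subtype.ext
    refine Prod.ext ?_ ?_
    · apply Subtype.ext
      refine ContinuousMap.ext fun f => ?_
      simp only [ContinuousMap.add_apply, ContinuousMap.comp_apply, ι₁, ι₂, π₁, π₂,
        ContinuousMap.coe_mk]
      rw [z2, add_zero]
    · apply Subtype.ext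
      refine ContinuousMap.ext fun g => ?_
      simp only [ContinuousMap.add_apply, ContinuousMap.comp_apply, ι₁, ι₂, π₁, π₂,
        ContinuousMap.coe_mk]
      rw [z1, zero_add]
  · show ((p.1.1.1.comp π₁ + p.1.2.1.comp π₂ : C(_, _))) fg = _
    simp only [ContinuousMap.add_apply, ContinuousMap.comp_apply, π₁, π₂,
      ContinuousMap.coe_mk]

end
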